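/- Let K be a field and q ∈ K nonzero, with q not a root of unity. For any n ≥ 1, the n × n matrix U with entries U_{j,s} = 1 - q^{2js} (for 1 ≤ j, s ≤ n) is invertible. -/

import Mathlib

open Polynomial Finset

lemma geom_natDegree {K : Type*} [Field K] (s : ℕ) :
    (∑ i ∈ range (s + 1), (X : K[X]) ^ i).natDegree = s := by
  induction s with
  | zero => simp
  | succ k ih =>
      rw [Finset.sum_range_succ, natDegree_add_eq_right_of_natDegree_lt]
      · simp
      · rw [ih]; simp

theorem stmt4 (K : Type*) [Field K] (q : K) (hq : q ≠ 0)
    (hroot : ∀ m : ℕ, 0 < m → q ^ m ≠ 1) (n : ℕ) (hn : 1 ≤ n) :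
    (Matrix.of fun j s : Fin n =>
      (1 : K) - q ^ (2 * ((j : ℕ) + 1) * ((s : ℕ) + 1))).det ≠ 0 := by
  set v : Fin n → K := fun j => q ^ (2 * ((j : ℕ) + 1)) with hv
  set p : Fin n → K[X] := fun s => ∑ i ∈ range ((s : ℕ) + 1), X ^ i with hp
  have hentry : ∀ j s : Fin n,
      (1 : K) - q ^ (2 * ((j : ℕ) + 1) * ((s : ℕ) + 1))
        = (1 - v j) * (p s).eval (v j) := by
    intro j s
    have : (p s).eval (v j) = ∑ i ∈ range ((s : ℕ) + 1), v j ^ i := by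
      simp [hp, eval_finset_sum]
    rw [this]
    have hg : (1 - v j) * ∑ i ∈ range ((s : ℕ) + 1), v j ^ i
        = 1 - v j ^ ((s : ℕ) + 1) := by
      have := geom_sum_mul (v j) ((s : ℕ) + 1)
      have h2 : (1 - v j) * ∑ i ∈ range ((s : ℕ) + 1), v j ^ i
          = -((∑ i ∈ range ((s : ℕ) + 1), v j ^ i) * (v j - 1)) := by ring
      rw [h2, this]; ring
    rw [hg, hv, ← pow_mul]
  have hmat : (Matrix.of fun j s : Fin n =>
      (1 : K) - q ^ (2 * ((j : ℕ) + 1) * ((s : ℕ) + 1)))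
      = Matrix.of fun j s : Fin n => (1 - v j) * ((p s).eval (v j)) := by
    ext j s; exact hentry j s
  rw [hmat]
  rw [show (Matrix.of fun j s : Fin n => (1 - v j) * ((p s).eval (v j)))
      = Matrix.of fun j s : Fin n =>
        (fun i => 1 - v i) j * (Matrix.of fun j s : Fin n => (p s).eval (v j)) j s from rfl]
  rw [Matrix.det_mul_column]
  have hdet : (Matrix.of fun j s : Fin n => (p s).eval (v j)).det
      = (Matrix.vandermonde v).det := by
    rw [Matrix.det_eval_matrixOfPolynomials_eq_det_vandermonde v p
      (fun s => geom_natDegree (s : ℕ)) (fun s => monic_geom_sum_X (Nat.succ_ne_zero _))]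
  rw [hdet]
  apply mul_ne_zero
  · apply Finset.prod_ne_zero_iff.mpr
    intro j _
    intro h
    have : v j = 1 := by linear_combination -h
    exact hroot (2 * ((j : ℕ) + 1)) (by positivity) this
  · rw [Matrix.det_vandermonde_ne_zero_iff]
    intro a b hab
    simp only [hv] at hab
    rcases lt_trichotomy (a : ℕ) (b : ℕ) with h | h | h
    · exfalso
      have hne : q ^ (2 * ((b : ℕ) + 1) - 2 * ((a : ℕ) + 1)) = 1 := by
        have hle : 2 * ((a : ℕ) + 1) ≤ 2 * ((b : ℕ) + 1) := by omega
        rw [pow_sub₀ _ hq hle, hab, mul_inv_cancel₀ (pow_ne_zero _ hq)]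
      exact hroot _ (by omega) hne
    · exact Fin.ext h
    · exfalso
      have hne : q ^ (2 * ((a : ℕ) + 1) - 2 * ((b : ℕ) + 1)) = 1 := by
        have hle : 2 * ((b : ℕ) + 1) ≤ 2 * ((a : ℕ) + 1) := by omega
        rw [pow_sub₀ _ hq hle, hab, mul_inv_cancel₀ (pow_ne_zero _ hq)]
      exact hroot _ (by omega) hne
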